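/- Let G be a Frobenius instance with parameter k, with layer weights w1,...,wl. Then G has a closed set of weight exactly k if and only if gcd(w1,...,wl) divides k. -/

import Mathlib

open Finset

set_option linter.unusedSectionVars false

section Frob

variable {V : Type*} [Fintype V] [DecidableEq V]
  (E : V → V → Prop) [DecidableRel (Relation.ReflTransGen E)]
  {l : ℕ} (k : ℕ) (layer : V → Fin l) (w : Fin l → ℕ)

/-- Descendant set of a vertex. -/
def frobDset (v : V) : Finset V :=
  Finset.univ.filter fun u => Relation.ReflTransGen E v u

/-- Weight of a set of vertices. -/
def frobWt (S : Finset V) : ℕ := ∑ v ∈ S, w (layer v)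

/-- Prefix gcd of the layer weights of layers with index `< i`. -/
def frobP (i : ℕ) : ℕ :=
  ((Finset.univ : Finset (Fin l)).filter fun j : Fin l => (j : ℕ) < i).gcd w

/-- Closedness of a set of vertices. -/
def frobClosed (S : Finset V) : Prop := ∀ u ∈ S, ∀ v, E u v → v ∈ S

lemma mem_frobDset_self (v : V) : v ∈ frobDset E v := by
  simp only [frobDset, mem_filter, mem_univ, true_and]
  exact Relation.ReflTransGen.refl

lemma frobDset_closed (v : V) : frobClosed E (frobDset E v) := by
  intro u hu x hx
  simp only [frobDset, mem_filter, mem_univ, true_and] at hu ⊢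
  exact hu.tail hx

lemma frobClosed_union {S T : Finset V} (hS : frobClosed E S) (hT : frobClosed E T) :
    frobClosed E (S ∪ T) := by
  intro u hu x hx
  rcases mem_union.mp hu with h | h
  · exact mem_union_left _ (hS u h x hx)
  · exact mem_union_right _ (hT u h x hx)

lemma frob_layer_le (hedge : ∀ u v, E u v → layer v < layer u) {v u : V}
    (h : Relation.ReflTransGen E v u) : layer u ≤ layer v := by
  induction h with
  | refl => exact le_refl _
  | tail _ e ih => exact le_trans (le_of_lt (hedge _ _ e)) ih

lemma frob_layer_lt (hedge : ∀ u v, E u v → layer v < layer u) {v u : V}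
    (h : Relation.ReflTransGen E v u) (hne : u ≠ v) : layer u < layer v := by
  rcases h.cases_tail with h' | ⟨c, hc, e⟩
  · exact absurd h' hne
  · exact lt_of_lt_of_le (hedge _ _ e) (frob_layer_le _ _ hedge hc)

lemma frob_card_le_wt (hw : ∀ i, 1 ≤ w i) (S : Finset V) :
    S.card ≤ frobWt layer w S := by
  rw [frobWt, card_eq_sum_ones]
  exact Finset.sum_le_sum fun i _ => hw _

lemma frob_card_mono (hw : ∀ i, 1 ≤ w i) {S T : Finset V} (hST : S ⊆ T) :
    T.card + frobWt layer w S ≤ S.card + frobWt layer w T := by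
  have h1 : (T \ S).card = T.card - S.card := card_sdiff_of_subset hST
  have h1' : S.card ≤ T.card := card_le_card hST
  have h2 : frobWt layer w T = frobWt layer w S + frobWt layer w (T \ S) := by
    rw [frobWt, frobWt, frobWt, ← Finset.sum_union disjoint_sdiff,
      Finset.union_sdiff_of_subset hST]
  have h3 : (T \ S).card ≤ frobWt layer w (T \ S) := frob_card_le_wt layer w hw _
  omega

lemma frob_exists_fresh
    (hsize : ∀ i : Fin l, k ≤ (Finset.univ.filter (fun v => layer v = i)).card)
    {S : Finset V} (j : Fin l) (h : S.card < k) : ∃ v, layer v = j ∧ v ∉ S := by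
  by_contra hc
  push_neg at hc
  have hsub : (Finset.univ.filter fun v => layer v = j) ⊆ S := by
    intro v hv
    exact hc v (by simpa using hv)
  have := card_le_card hsub
  have := hsize j
  omega

lemma frob_exists_coeff {wi G r : ℕ} (hG : 0 < G) (hdvd : Nat.gcd wi G ∣ r) :
    ∃ a : ℕ, a < G / Nat.gcd wi G ∧ (G : ℤ) ∣ ((a : ℤ) * wi - r) := by
  set d := Nat.gcd wi G with hd
  have hdpos : 0 < d := Nat.gcd_pos_of_pos_right _ hG
  obtain ⟨t, ht⟩ := hdvd
  obtain ⟨wi', hwi'⟩ := Nat.gcd_dvd_left wi G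
  have hmpos : 0 < G / d := Nat.div_pos (Nat.le_of_dvd hG (Nat.gcd_dvd_right wi G)) hdpos
  have hmpos' : (0 : ℤ) < ((G / d : ℕ) : ℤ) := by exact_mod_cast hmpos
  set z : ℤ := Nat.gcdA wi G * t with hz
  set a' : ℤ := z % ((G / d : ℕ) : ℤ) with ha'
  have ha'0 : 0 ≤ a' := Int.emod_nonneg z (ne_of_gt hmpos')
  have ha'lt : a' < ((G / d : ℕ) : ℤ) := Int.emod_lt_of_pos z hmpos'
  refine ⟨a'.toNat, ?_, ?_⟩
  · have h : ((a'.toNat : ℤ)) < ((G / d : ℕ) : ℤ) := by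
      rw [Int.toNat_of_nonneg ha'0]; exact ha'lt
    exact_mod_cast h
  · rw [Int.toNat_of_nonneg ha'0]
    have h1 : (G : ℤ) ∣ z * wi - r := by
      refine ⟨-(Nat.gcdB wi G * t), ?_⟩
      have hr : (r : ℤ) = (d : ℤ) * t := by exact_mod_cast ht
      have hb := Nat.gcd_eq_gcd_ab wi G
      rw [hr, hz]
      rw [← hd] at hb
      rw [hb]
      ring
    have h2 : (G : ℤ) ∣ (z - a') * wi := by
      have he : z - a' = ((G / d : ℕ) : ℤ) * (z / ((G / d : ℕ) : ℤ)) := by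
        have h3 := Int.emod_add_mul_ediv z ((G / d : ℕ) : ℤ)
        rw [← ha'] at h3
        linarith
      have hmul : ((G / d : ℕ) : ℤ) * (wi : ℤ) = (G : ℤ) * (wi' : ℤ) := by
        have h4 : (G / d) * wi = G * wi' := by
          calc (G / d) * wi = (G / d) * (d * wi') := by rw [← hwi']
            _ = ((G / d) * d) * wi' := by ring
            _ = G * wi' := by rw [Nat.div_mul_cancel (Nat.gcd_dvd_right wi G)]
        exact_mod_cast h4
      refine ⟨(z / ((G / d : ℕ) : ℤ)) * wi', ?_⟩
      rw [he]
      calc ((G / d : ℕ) : ℤ) * (z / ((G / d : ℕ) : ℤ)) * wi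
          = (z / ((G / d : ℕ) : ℤ)) * (((G / d : ℕ) : ℤ) * wi) := by ring
        _ = (z / ((G / d : ℕ) : ℤ)) * ((G : ℤ) * wi') := by rw [hmul]
        _ = (G : ℤ) * ((z / ((G / d : ℕ) : ℤ)) * wi') := by ring
    have heq : a' * (wi : ℤ) - r = (z * wi - r) - (z - a') * wi := by ring
    rw [heq]
    exact dvd_sub h1 h2

lemma frob_helperA (hw : ∀ i, 1 ≤ w i)
    (hedge : ∀ u v, E u v → layer v < layer u)
    (hsize : ∀ i : Fin l, k ≤ (Finset.univ.filter (fun v => layer v = i)).card)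
    (B : ℕ) (hB : ∀ v, frobWt layer w (frobDset E v) ≤ B) (hB1 : 1 ≤ B) (j : Fin l) :
    ∀ a : ℕ, ∀ S : Finset V, frobClosed E S → S.card + a * B ≤ k →
    ∃ T c, frobClosed E T ∧ S ⊆ T ∧
      frobWt layer w T = frobWt layer w S + a * w j + c ∧
      a * w j + c ≤ a * B ∧ frobP w (j : ℕ) ∣ c := by
  intro a
  induction a with
  | zero =>
    intro S hS _
    exact ⟨S, 0, hS, subset_rfl, by simp, by simp, dvd_zero _⟩
  | succ a ih =>
    intro S hS hcard
    have hstep : (a + 1) * B = a * B + B := by ring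
    obtain ⟨T, c, hT, hST, hwT, hbound, hdvd⟩ := ih S hS (by omega)
    have hcm := frob_card_mono layer w hw hST
    rw [hwT] at hcm
    have hTcard : T.card < k := by omega
    obtain ⟨v, hvl, hvT⟩ := frob_exists_fresh k layer hsize j hTcard
    set N := frobDset E v \ T with hN
    have hvN : v ∈ N := mem_sdiff.mpr ⟨mem_frobDset_self E v, hvT⟩
    have hwtN : frobWt layer w N ≤ B :=
      le_trans (Finset.sum_le_sum_of_subset sdiff_subset) (hB v)
    have hUnion : frobWt layer w (T ∪ frobDset E v) = frobWt layer w T + frobWt layer w N := by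
      rw [frobWt, frobWt, frobWt, ← Finset.union_sdiff_self_eq_union,
        Finset.sum_union disjoint_sdiff]
    have hsplitN : frobWt layer w N = w j + frobWt layer w (N.erase v) := by
      rw [frobWt, frobWt, ← Finset.add_sum_erase _ _ hvN, hvl]
    have hjunk : frobP w (j : ℕ) ∣ frobWt layer w (N.erase v) := by
      apply Finset.dvd_sum
      intro u hu
      have hune : u ≠ v := (mem_erase.mp hu).1
      have huD : u ∈ frobDset E v := (mem_sdiff.mp (mem_erase.mp hu).2).1
      have hrtg : Relation.ReflTransGen E v u := by
        simpa [frobDset] using huD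
      have hlt : layer u < layer v := frob_layer_lt E layer hedge hrtg hune
      apply Finset.gcd_dvd
      simp only [mem_filter, mem_univ, true_and]
      rw [hvl] at hlt
      exact hlt
    refine ⟨T ∪ frobDset E v, c + frobWt layer w (N.erase v),
      frobClosed_union E hT (frobDset_closed E v), hST.trans subset_union_left, ?_, ?_,
      dvd_add hdvd hjunk⟩
    · rw [hUnion, hwT, hsplitN]; ring
    · have h1 : w j + frobWt layer w (N.erase v) ≤ B := by rw [← hsplitN]; exact hwtN
      have h2 : (a + 1) * w j = a * w j + w j := by ring
      omega

lemma frob_helperB (hw : ∀ i, 1 ≤ w i)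
    (hedge : ∀ u v, E u v → layer v < layer u)
    (hsize : ∀ i : Fin l, k ≤ (Finset.univ.filter (fun v => layer v = i)).card)
    (hl : 0 < l) :
    ∀ m : ℕ, ∀ S : Finset V, frobClosed E S → S.card + m ≤ k →
    ∃ T, frobClosed E T ∧
      frobWt layer w T = frobWt layer w S + m * w ⟨0, hl⟩ ∧ T.card ≤ S.card + m := by
  intro m
  induction m with
  | zero => exact fun S hS _ => ⟨S, hS, by simp, by simp⟩
  | succ m ih =>
    intro S hS hc
    obtain ⟨T, hT, hwT, hcT⟩ := ih S hS (by omega)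
    obtain ⟨v, hv, hvT⟩ := frob_exists_fresh k layer hsize ⟨0, hl⟩ (show T.card < k by omega)
    refine ⟨insert v T, ?_, ?_, ?_⟩
    · intro u hu x hx
      rcases mem_insert.mp hu with rfl | hu'
      · exfalso
        have h1 := hedge u x hx
        rw [hv] at h1
        exact absurd h1 (by simp [Fin.lt_def])
      · exact mem_insert_of_mem (hT u hu' x hx)
    · rw [frobWt, Finset.sum_insert hvT, hv]
      rw [frobWt] at hwT
      rw [hwT]
      ring
    · rw [card_insert_of_notMem hvT]; omega

lemma frobKey (hw : ∀ i, 1 ≤ w i)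
    (hedge : ∀ u v, E u v → layer v < layer u)
    (hsize : ∀ i : Fin l, k ≤ (Finset.univ.filter (fun v => layer v = i)).card)
    (hl : 0 < l) (hk : 0 < k)
    (B : ℕ) (hB : ∀ v, frobWt layer w (frobDset E v) ≤ B) (hB1 : 1 ≤ B) :
    ∀ i : ℕ, 1 ≤ i → i ≤ l → ∀ r : ℕ, ∀ S : Finset V, frobClosed E S →
      frobP w i ∣ r →
      w ⟨0, hl⟩ * B ≤ r * frobP w i + frobP w i * B →
      S.card + r ≤ k →
      ∃ T, frobClosed E T ∧ frobWt layer w T = frobWt layer w S + r := by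
  intro i hi
  induction i, hi using Nat.le_induction with
  | base =>
    intro _ r S hS hdvd _ hcard
    have hP1 : frobP w 1 = w ⟨0, hl⟩ := by
      have hfilter : ((Finset.univ : Finset (Fin l)).filter fun j : Fin l => (j : ℕ) < 1)
          = {⟨0, hl⟩} := by
        ext j
        simp [Fin.ext_iff]
      rw [frobP, hfilter, Finset.gcd_singleton]
      exact normalize_eq _
    rw [hP1] at hdvd
    obtain ⟨m, hm⟩ := hdvd
    have hmr : m ≤ r := by
      have := hw ⟨0, hl⟩
      calc m ≤ w ⟨0, hl⟩ * m := Nat.le_mul_of_pos_left m (hw _)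
        _ = r := hm.symm
    obtain ⟨T, hT, hwT, _⟩ := frob_helperB E k layer w hw hedge hsize hl m S hS (by omega)
    refine ⟨T, hT, ?_⟩
    rw [hwT, hm]
    ring
  | succ i hi1 ih =>
    intro hil r S hS hdvd hinv hcard
    have hil' : i < l := hil
    set G := frobP w i with hGdef
    set wi := w ⟨i, hil'⟩ with hwidef
    have hsplit : frobP w (i + 1) = Nat.gcd wi G := by
      have hfilter : ((Finset.univ : Finset (Fin l)).filter fun j : Fin l => (j : ℕ) < i + 1)
          = insert ⟨i, hil'⟩ ((Finset.univ : Finset (Fin l)).filter fun j : Fin l => (j : ℕ) < i) := by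
        ext j
        simp [Fin.ext_iff]
        omega
      rw [frobP, hfilter, Finset.gcd_insert]
      rfl
    have hGdvd0 : G ∣ w ⟨0, hl⟩ := by
      apply Finset.gcd_dvd
      simp only [mem_filter, mem_univ, true_and]
      exact hi1
    have hGpos : 0 < G := by
      rcases Nat.eq_zero_or_pos G with h | h
      · rw [h] at hGdvd0
        have := Nat.eq_zero_of_zero_dvd hGdvd0
        have := hw ⟨0, hl⟩
        omega
      · exact h
    rw [hsplit] at hdvd hinv
    set G' := Nat.gcd wi G with hG'def
    have hG'dvd : G' ∣ G := Nat.gcd_dvd_right _ _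
    have hG'pos : 0 < G' := Nat.gcd_pos_of_pos_right _ hGpos
    obtain ⟨a, ham, haz⟩ := frob_exists_coeff hGpos hdvd
    set f := G / G' with hfdef
    have hGf : G' * f = G := Nat.mul_div_cancel' hG'dvd
    have haf : a + 1 ≤ f := ham
    have hGw0 : G ≤ w ⟨0, hl⟩ := Nat.le_of_dvd (hw _) hGdvd0
    have hwiB : wi ≤ B := by
      obtain ⟨v, hv, -⟩ := frob_exists_fresh k layer hsize (S := (∅ : Finset V)) ⟨i, hil'⟩
        (by simpa using hk)
      calc wi = w (layer v) := by rw [hv]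
        _ ≤ frobWt layer w (frobDset E v) :=
            Finset.single_le_sum (f := fun u => w (layer u)) (fun u _ => Nat.zero_le _)
              (mem_frobDset_self E v)
        _ ≤ B := hB v
    set w0 := w ⟨0, hl⟩ with hw0def
    have key1 : (a + 1) * (w0 * B) ≤ r * G + G * B := by
      calc (a + 1) * (w0 * B) ≤ f * (w0 * B) := Nat.mul_le_mul_right _ haf
        _ ≤ f * (r * G' + G' * B) := Nat.mul_le_mul_left _ hinv
        _ = r * (G' * f) + (G' * f) * B := by ring
        _ = r * G + G * B := by rw [hGf]
    have habG : a * B * G + w0 * B ≤ (a + 1) * (w0 * B) := by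
      have h1 : a * B * G ≤ a * (w0 * B) := by
        calc a * B * G = a * (G * B) := by ring
          _ ≤ a * (w0 * B) := Nat.mul_le_mul_left _ (Nat.mul_le_mul_right _ hGw0)
      have h2 : (a + 1) * (w0 * B) = a * (w0 * B) + w0 * B := by ring
      omega
    have haB : a * B ≤ r := by
      have h2 : a * B * G + w0 * B ≤ r * G + G * B := le_trans habG key1
      have h3 : G * B ≤ w0 * B := Nat.mul_le_mul_right _ hGw0
      have h4 : a * B * G ≤ r * G := by omega
      have h5 : a * B * G = (a * B) * G := by ring
      rw [h5] at h4
      exact Nat.le_of_mul_le_mul_right h4 hGpos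
    obtain ⟨T, c, hT, hST, hwT, hbound, hdc⟩ :=
      frob_helperA E k layer w hw hedge hsize B hB hB1 ⟨i, hil'⟩ a S hS (by omega)
    rw [← hwidef] at hwT hbound
    have hdc' : G ∣ c := hdc
    have hawc : a * wi + c ≤ r := le_trans hbound haB
    obtain ⟨r', hr'⟩ := Nat.exists_eq_add_of_le hawc
    have hdvdr' : G ∣ r' := by
      have h2 : (G : ℤ) ∣ ((r : ℤ) - a * wi) := by
        have := (dvd_neg (α := ℤ)).mpr haz
        rw [neg_sub] at this
        exact this
      have h3 : (G : ℤ) ∣ (c : ℤ) := Int.natCast_dvd_natCast.mpr hdc'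
      have h4 : (r' : ℤ) = ((r : ℤ) - a * wi) - c := by
        have h5 := congrArg (fun n : ℕ => (n : ℤ)) hr'
        push_cast at h5
        linarith
      have h6 : (G : ℤ) ∣ (r' : ℤ) := by rw [h4]; exact dvd_sub h2 h3
      exact_mod_cast h6
    have hinv' : w0 * B ≤ r' * G + G * B := by
      have e1 : r * G = (a * wi + c) * G + r' * G := by rw [hr']; ring
      have e2 : (a * wi + c) * G ≤ a * B * G := Nat.mul_le_mul_right G hbound
      omega
    have hcm := frob_card_mono layer w hw hST
    rw [hwT] at hcm
    have hcard' : T.card + r' ≤ k := by omega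
    obtain ⟨Tf, hTf, hwTf⟩ := ih (le_of_lt hil') r' T hT hdvdr' hinv' hcard'
    refine ⟨Tf, hTf, ?_⟩
    rw [hwTf, hwT, hr']
    ring

end Frob

/-- Criterion for Frobenius instances: a Frobenius instance with parameter `k`
(layered weighted DAG with layer weights `w i ≥ 1`, edges going to strictly lower
layers, each layer of size at least `k`, and every descendant set of total weight
at most `√(k/2)`) has a closed set of weight exactly `k` iff `gcd(w 1, ..., w l) ∣ k`. -/
theorem frobenius_instance_criterion {V : Type*} [Fintype V] [DecidableEq V]
    (E : V → V → Prop) [DecidableRel (Relation.ReflTransGen E)]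
    (l k : ℕ) (layer : V → Fin l) (w : Fin l → ℕ)
    (hw : ∀ i, 1 ≤ w i)
    (hedge : ∀ u v, E u v → layer v < layer u)
    (hsize : ∀ i : Fin l, k ≤ (Finset.univ.filter (fun v => layer v = i)).card)
    (hdesc : ∀ v : V,
      ((∑ u ∈ Finset.univ.filter (fun u => Relation.ReflTransGen E v u),
          w (layer u) : ℕ) : ℝ) ≤ Real.sqrt ((k : ℝ) / 2)) :
    (∃ S : Finset V, (∀ u ∈ S, ∀ v, E u v → v ∈ S) ∧ ∑ v ∈ S, w (layer v) = k) ↔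
      Finset.univ.gcd w ∣ k := by
  constructor
  · rintro ⟨S, _, hSsum⟩
    rw [← hSsum]
    exact Finset.dvd_sum fun v _ => Finset.gcd_dvd (mem_univ (layer v))
  · intro hg
    rcases Nat.eq_zero_or_pos k with rfl | hk
    · exact ⟨∅, by simp, by simp⟩
    rcases Nat.eq_zero_or_pos l with rfl | hl
    · exfalso
      have huniv : (Finset.univ : Finset (Fin 0)) = ∅ := by simp
      rw [huniv, Finset.gcd_empty] at hg
      have := Nat.eq_zero_of_zero_dvd hg
      omega
    haveI hne : Nonempty V := by
      have h0 := hsize ⟨0, hl⟩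
      have hpos : 0 < (Finset.univ.filter fun v => layer v = ⟨0, hl⟩).card :=
        lt_of_lt_of_le hk h0
      obtain ⟨v, -⟩ := Finset.card_pos.mp hpos
      exact ⟨v⟩
    set B := Finset.univ.sup (fun v => frobWt layer w (frobDset E v)) with hBdef
    have hB : ∀ v, frobWt layer w (frobDset E v) ≤ B := fun v =>
      Finset.le_sup (f := fun v => frobWt layer w (frobDset E v)) (mem_univ v)
    obtain ⟨v0, -, hv0⟩ := Finset.exists_mem_eq_sup (Finset.univ : Finset V)
      Finset.univ_nonempty (fun v => frobWt layer w (frobDset E v))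
    have hwtge : ∀ v : V, 1 ≤ frobWt layer w (frobDset E v) := by
      intro v
      calc 1 ≤ w (layer v) := hw _
        _ ≤ frobWt layer w (frobDset E v) :=
            Finset.single_le_sum (f := fun u => w (layer u)) (fun u _ => Nat.zero_le _)
              (mem_frobDset_self E v)
    have hB1 : 1 ≤ B := le_trans (hwtge v0) (hB v0)
    have hdesc0 : ((frobWt layer w (frobDset E v0) : ℕ) : ℝ) ≤ Real.sqrt ((k : ℝ) / 2) :=
      hdesc v0
    have hBreal : (B : ℝ) ≤ Real.sqrt ((k : ℝ) / 2) := by rw [hBdef, hv0]; exact hdesc0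
    have hBsq : (B : ℝ) ^ 2 ≤ (k : ℝ) / 2 := by
      have h1 := pow_le_pow_left₀ (by positivity) hBreal 2
      rwa [Real.sq_sqrt (by positivity)] at h1
    have hBBk : B * B ≤ k := by
      have h2 : ((B * B : ℕ) : ℝ) ≤ (k : ℝ) := by push_cast; nlinarith
      exact_mod_cast h2
    obtain ⟨vz, hvz, -⟩ := frob_exists_fresh k layer hsize (S := (∅ : Finset V)) ⟨0, hl⟩
      (by simpa using hk)
    have hw0B : w ⟨0, hl⟩ ≤ B := by
      calc w ⟨0, hl⟩ = w (layer vz) := by rw [hvz]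
        _ ≤ frobWt layer w (frobDset E vz) :=
            Finset.single_le_sum (f := fun u => w (layer u)) (fun u _ => Nat.zero_le _)
              (mem_frobDset_self E vz)
        _ ≤ B := hB vz
    have hPl : frobP w l = Finset.univ.gcd w := by
      rw [frobP]
      congr 1
      apply Finset.filter_true_of_mem
      intro j _
      exact j.isLt
    have hPldvd : frobP w l ∣ k := by rw [hPl]; exact hg
    have hPl0 : frobP w l ∣ w ⟨0, hl⟩ := by
      apply Finset.gcd_dvd
      simp only [mem_filter, mem_univ, true_and]
      exact (⟨0, hl⟩ : Fin l).isLt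
    have hPlpos : 0 < frobP w l := by
      rcases Nat.eq_zero_or_pos (frobP w l) with h | h
      · rw [h] at hPl0
        have := Nat.eq_zero_of_zero_dvd hPl0
        have := hw ⟨0, hl⟩
        omega
      · exact h
    have hinv : w ⟨0, hl⟩ * B ≤ k * frobP w l + frobP w l * B := by
      have h1 : w ⟨0, hl⟩ * B ≤ B * B := Nat.mul_le_mul_right _ hw0B
      have h2 : k ≤ k * frobP w l := Nat.le_mul_of_pos_right _ hPlpos
      omega
    obtain ⟨T, hT, hwT⟩ := frobKey E k layer w hw hedge hsize hl hk B hB hB1 l hl le_rfl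
      k ∅ (fun u hu => absurd hu (notMem_empty u)) hPldvd hinv (by simp)
    refine ⟨T, hT, ?_⟩
    have hempty : frobWt layer w (∅ : Finset V) = 0 := by simp [frobWt]
    rw [hempty, zero_add] at hwT
    exact hwT
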